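/- Let 𝔤 be a finite-dimensional real Lie algebra with an invariant inner product ⟨·,·⟩, and for L ∈ 𝔤 let P_L denote the orthogonal projection of 𝔤 onto the range of ad_L. Let H : 𝔤 → ℝ be differentiable and let ∇H(L) ∈ 𝔤 denote its gradient relative to ⟨·,·⟩, i.e., dH(L)(Y) = ⟨∇H(L), Y⟩ for all Y ∈ 𝔤. Then for all L, X ∈ 𝔤 one has dH(L)([L,X]) = ⟨−[L,∇H(L)], P_L X⟩, and −[L,∇H(L)] lies in the range of ad_L. Consequently, the gradient of H relative to the normal metric is grad H(L) = −[L,[L,∇H(L)]]. -/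

import Mathlib

open scoped InnerProductSpace

/-- Let `𝔤` be a finite-dimensional real Lie algebra with an invariant inner product,
`P_L` the orthogonal projection onto the range of `ad_L`, `H : 𝔤 → ℝ` differentiable
with gradient `∇H` relative to the inner product.  Then
`dH(L)([L,X]) = ⟨−[L,∇H(L)], P_L X⟩` and `−[L,∇H(L)]` lies in the range of `ad_L`;
hence the gradient of `H` for the normal metric is `grad H(L) = −[L,[L,∇H(L)]]`. -/
theorem stmt_1
    {g : Type*} [NormedAddCommGroup g] [InnerProductSpace ℝ g]
    [FiniteDimensional ℝ g] [LieRing g]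
    (hsmul : ∀ (c : ℝ) (X Y : g), ⁅X, c • Y⁆ = c • ⁅X, Y⁆)
    (hinv : ∀ X Y Z : g, ⟪⁅X, Y⁆, Z⟫_ℝ = ⟪X, ⁅Y, Z⁆⟫_ℝ)
    (H : g → ℝ) (hH : @Differentiable ℝ _ g (@NormedAddCommGroup.toAddCommGroup g _) _ _ ℝ _ _ _ H) (gradH : g → g)
    (hgrad : ∀ L Y : g, @fderiv ℝ _ g (@NormedAddCommGroup.toAddCommGroup g _) _ _ ℝ _ _ _ H L Y = ⟪gradH L, Y⟫_ℝ)
    (L X : g) :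
    @fderiv ℝ _ g (@NormedAddCommGroup.toAddCommGroup g _) _ _ ℝ _ _ _ H L ⁅L, X⁆ =
      ⟪-⁅L, gradH L⁆,
        ((Submodule.orthogonalProjectionOnto (@Submodule.span ℝ g _ (@NormedAddCommGroup.toAddCommGroup g _).toAddCommMonoid _ {z : g | ∃ Y, ⁅L, Y⁆ = z}) X : g))⟫_ℝ ∧
    -⁅L, gradH L⁆ ∈ @Submodule.span ℝ g _ (@NormedAddCommGroup.toAddCommGroup g _).toAddCommMonoid _ {z : g | ∃ Y, ⁅L, Y⁆ = z} := by
  letI : AddCommGroup g := NormedAddCommGroup.toAddCommGroup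
  set K := @Submodule.span ℝ g _ (@NormedAddCommGroup.toAddCommGroup g _).toAddCommMonoid _ {z : g | ∃ Y, ⁅L, Y⁆ = z} with hK
  have hmem : -⁅L, gradH L⁆ ∈ K := neg_mem (Submodule.subset_span ⟨gradH L, rfl⟩)
  -- the LieRing zero coincides with the normed zero
  have hzero : (⁅(0 : g), (0 : g)⁆ : g) = 0 := by
    have := hsmul 0 (0 : g) (0 : g)
    simpa using this
  -- ⟪X, ⁅X, Z⁆⟫ = 0
  have h0 : ∀ W Z : g, ⟪W, ⁅W, Z⁆⟫_ℝ = 0 := by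
    intro W Z
    have h1 : ⟪(⁅W, W⁆ : g), Z⟫_ℝ = ⟪W, ⁅W, Z⁆⟫_ℝ := hinv W W Z
    have h2 : (⁅W, W⁆ : g) = ⁅(0 : g), (0 : g)⁆ := by rw [lie_self, lie_self]
    rw [h2, hzero, inner_zero_left] at h1
    exact h1.symm
  -- bracket is additive in the first slot over the normed addition
  have badd : ∀ A B Z : g, (⁅A + B, Z⁆ : g) = ⁅A, Z⁆ + ⁅B, Z⁆ := by
    intro A B Z
    apply ext_inner_right ℝ
    intro v
    rw [hinv, inner_add_left, inner_add_left, hinv, hinv]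
  -- skew symmetry at the level of inner products
  have hskew : ⟪gradH L, ⁅L, X⁆⟫_ℝ = -⟪(⁅L, gradH L⁆ : g), X⟫_ℝ := by
    have := h0 (L + gradH L) X
    rw [badd L (gradH L) X, inner_add_left, inner_add_right, inner_add_right,
      h0 L X, h0 (gradH L) X] at this
    rw [hinv]
    linarith
  have hGL : (⁅gradH L, L⁆ : g) = -⁅L, gradH L⁆ := by
    apply ext_inner_right ℝ
    intro v
    rw [hinv, inner_neg_left, hinv]
    have := h0 (L + gradH L) v
    rw [badd L (gradH L) v, inner_add_left, inner_add_right, inner_add_right,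
      h0 L v, h0 (gradH L) v] at this
    linarith
  rw [lie_skew, hGL]
  refine ⟨?_, hmem⟩
  have h1 : @fderiv ℝ _ g (@NormedAddCommGroup.toAddCommGroup g _) _ _ ℝ _ _ _ H L ⁅L, X⁆ = ⟪-⁅L, gradH L⁆, X⟫_ℝ := by
    rw [hgrad, hskew, inner_neg_left]
  rw [h1]
  have h2 : X - (K.orthogonalProjectionOnto X : g) ∈ Kᗮ :=
    K.sub_starProjection_mem_orthogonal X
  have h3 : ⟪-⁅L, gradH L⁆, X - (K.orthogonalProjectionOnto X : g)⟫_ℝ = 0 := h2 _ hmem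
  rw [inner_sub_right] at h3
  linarith
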